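/- On the phase space of the relativistic diffusion in Gödel's universe, a² ≥ 1 and b² ≥ 2e^{2√2 ω x}; moreover a and b have the same sign and satisfy |e^{-√2 ω x}(b/a) - 2| ≤ √2, hence e^{-√2 ω x}(b/a) ≥ 2 - √2, and |e^{√2 ω x}(a/b) - 1| ≤ 1/√2. -/

import Mathlib

open Real

set_option maxHeartbeats 1000000

theorem godel_phase_space_bounds (ω x a b xdot zdot : ℝ) (hω : 0 < ω)
    (h : 1 + xdot ^ 2 + zdot ^ 2
        + (1/2) * (2 * a - exp (-(Real.sqrt 2 * ω * x)) * b) ^ 2 = a ^ 2) :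
    a ^ 2 ≥ 1 ∧
    b ^ 2 ≥ 2 * exp (2 * Real.sqrt 2 * ω * x) ∧
    a ≠ 0 ∧ b ≠ 0 ∧ a * b > 0 ∧
    |exp (-(Real.sqrt 2 * ω * x)) * (b / a) - 2| ≤ Real.sqrt 2 ∧
    exp (-(Real.sqrt 2 * ω * x)) * (b / a) ≥ 2 - Real.sqrt 2 ∧
    |exp (Real.sqrt 2 * ω * x) * (a / b) - 1| ≤ 1 / Real.sqrt 2 := by
  set E := exp (-(Real.sqrt 2 * ω * x)) with hEdef
  set F := exp (Real.sqrt 2 * ω * x) with hFdef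
  have hEpos : 0 < E := exp_pos _
  have hFpos : 0 < F := exp_pos _
  have hFE : F * E = 1 := by rw [hEdef, hFdef, ← Real.exp_add]; simp
  have hE2 : exp (2 * Real.sqrt 2 * ω * x) * E ^ 2 = 1 := by
    rw [hEdef, ← Real.exp_nat_mul, ← Real.exp_add]; norm_num; ring_nf
  set G := exp (2 * Real.sqrt 2 * ω * x) with hGdef
  have hGpos : 0 < G := exp_pos _
  clear_value E F G
  clear hEdef hFdef hGdef hω
  have hs2 : Real.sqrt 2 ^ 2 = 2 := Real.sq_sqrt (by norm_num)
  have hs2pos : 0 < Real.sqrt 2 := Real.sqrt_pos.mpr (by norm_num)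
  have ha2 : a ^ 2 ≥ 1 := by
    nlinarith [sq_nonneg xdot, sq_nonneg zdot, sq_nonneg (2*a - E*b)]
  have ha : a ≠ 0 := by intro h0; rw [h0] at ha2; norm_num at ha2
  have hu2 : (E*b)^2 ≥ 2 := by
    nlinarith [sq_nonneg xdot, sq_nonneg zdot, sq_nonneg (a - E*b)]
  have hb : b ≠ 0 := by
    intro h0; rw [h0] at hu2; norm_num at hu2
  have hab : a * b > 0 := by
    by_contra hc
    push_neg at hc
    have h1 : E * (a * b) ≤ 0 := mul_nonpos_of_nonneg_of_nonpos (le_of_lt hEpos) hc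
    nlinarith [sq_nonneg xdot, sq_nonneg zdot, sq_nonneg a, sq_nonneg (E*b), hu2, ha2]
  -- t := E*(b/a)
  have ht : a * (E * (b/a)) = E * b := by field_simp
  set t := E * (b/a) with htdef
  clear_value t
  have h2 : (2*a - E*b)^2 = a^2*(t-2)^2 := by rw [← ht]; ring
  have hkeyt : a^2*(t-2)^2 = 2*a^2 - 2 - 2*xdot^2 - 2*zdot^2 := by
    rw [← h2]; linear_combination 2*h
  have hsqt : (t-2)^2 ≤ 2 := by
    by_contra hc
    push_neg at hc
    nlinarith [mul_pos (show (0:ℝ) < a^2 by positivity) (show (0:ℝ) < (t-2)^2 - 2 by linarith),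
      hkeyt, sq_nonneg xdot, sq_nonneg zdot]
  have habs1 : |t - 2| ≤ Real.sqrt 2 := by
    rw [abs_le]
    constructor
    · nlinarith [sq_nonneg (t - 2 + Real.sqrt 2)]
    · nlinarith [sq_nonneg (t - 2 - Real.sqrt 2)]
  have hge : t ≥ 2 - Real.sqrt 2 := by
    have := (abs_le.mp habs1).1; linarith
  -- s := F*(a/b)
  have hEF : E * F = 1 := by rw [mul_comm]; exact hFE
  have hs : (E*b) * (F * (a/b)) = a := by
    field_simp
    exact hEF
  set s := F * (a/b) with hsdef
  clear_value s
  have h3 : (a - E*b)^2 = (E*b)^2 * (s-1)^2 := by rw [← hs]; ring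
  have hkeys : (E*b)^2*(s-1)^2 = (1/2)*(E*b)^2 - 1 - xdot^2 - zdot^2 := by
    rw [← h3]; linear_combination h
  have hsqs : (s-1)^2 ≤ 1/2 := by
    by_contra hc
    push_neg at hc
    have hubpos : (0:ℝ) < (E*b)^2 := by linarith
    nlinarith [mul_pos hubpos (show (0:ℝ) < (s-1)^2 - 1/2 by linarith),
      hkeys, sq_nonneg xdot, sq_nonneg zdot]
  have habs2 : |s - 1| ≤ 1 / Real.sqrt 2 := by
    have h12 : (1 / Real.sqrt 2)^2 = 1/2 := by
      rw [div_pow, hs2, one_pow]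
    have h12pos : 0 < 1 / Real.sqrt 2 := by positivity
    rw [abs_le]
    constructor
    · nlinarith [sq_nonneg (s - 1 + 1 / Real.sqrt 2)]
    · nlinarith [sq_nonneg (s - 1 - 1 / Real.sqrt 2)]
  have hb2 : b ^ 2 ≥ 2 * G := by
    have hGb : G * (E*b)^2 = b^2 := by linear_combination b^2 * hE2
    linarith [mul_le_mul_of_nonneg_left hu2 hGpos.le]
  exact ⟨ha2, hb2, ha, hb, hab, habs1, hge, habs2⟩
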